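/- Let x ∈ ℝ^d. (i) If p and q are homogeneous polynomials in d variables hyperbolic in direction x, then the product p·q is hyperbolic in direction x. (ii) If p is homogeneous of degree m and hyperbolic in direction x, and p(y + t x) = Σ_{k=0}^m p_k(y) t^k where each p_k is a homogeneous polynomial of degree m − k in y, then every p_k (0 ≤ k ≤ m) is hyperbolic in direction x. -/

import Mathlib

open Polynomial Complex

private lemma derivEval (z : ℂ) :
    ∀ (R : Multiset ℂ), (∀ r ∈ R, z - r ≠ 0) →
      eval z (derivative ((R.map (fun r => X - C r)).prod)) =
        eval z ((R.map (fun r => X - C r)).prod) * (R.map (fun r => (z - r)⁻¹)).sum ∧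
      eval z ((R.map (fun r => X - C r)).prod) ≠ 0 := by
  refine Multiset.induction ?_ ?_
  · simp
  · intro r R IH hall
    have hr0 : z - r ≠ 0 := hall r (Multiset.mem_cons_self _ _)
    have IH' := IH fun s hs => hall s (Multiset.mem_cons_of_mem hs)
    constructor
    · simp only [Multiset.map_cons, Multiset.prod_cons, Multiset.sum_cons, derivative_mul,
        eval_add, eval_mul, eval_sub, eval_X, eval_C, derivative_sub, derivative_X, derivative_C,
        sub_zero, eval_one, one_mul]
      rw [IH'.1]
      field_simp
    · simp only [Multiset.map_cons, Multiset.prod_cons, eval_mul, eval_sub, eval_X, eval_C]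
      exact mul_ne_zero hr0 IH'.2

private lemma imSumNeg {z : ℂ} (hz : z.im ≠ 0) (R : Multiset ℂ) (hR : ∀ r ∈ R, r.im = 0)
    (hne : R ≠ 0) : (R.map (fun r => (z - r)⁻¹)).sum ≠ 0 := by
  have hzsub : ∀ s ∈ R, z - s ≠ 0 := fun s hs h0 =>
    hz (by simpa [Complex.sub_im, hR s hs] using congrArg Complex.im h0)
  intro h
  have him : ((R.map (fun r => (z - r)⁻¹)).sum).im = 0 := by rw [h]; simp
  have h1 : ((R.map (fun r => (z - r)⁻¹)).sum).im
      = (R.map (fun r => -z.im / normSq (z - r))).sum := by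
    have h2 := map_multiset_sum Complex.imAddGroupHom (R.map fun r => (z - r)⁻¹)
    rw [Complex.coe_imAddGroupHom] at h2
    rw [h2, Multiset.map_map]
    apply congrArg
    apply Multiset.map_congr rfl
    intro r hr
    simp [Complex.inv_im, Complex.sub_im, hR r hr]
  rw [h1] at him
  have hmap : (R.map (fun r => -z.im / normSq (z - r))).sum
      = -z.im * (R.map (fun r => (normSq (z - r))⁻¹)).sum := by
    rw [← Multiset.sum_map_mul_left]
    apply congrArg
    apply Multiset.map_congr rfl
    intro r hr
    ring
  rw [hmap] at him
  obtain ⟨r, hr⟩ := Multiset.exists_mem_of_ne_zero hne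
  obtain ⟨R', rfl⟩ := Multiset.exists_cons_of_mem hr
  have hpos : (0:ℝ) < ((r ::ₘ R').map (fun s => (normSq (z - s))⁻¹)).sum := by
    rw [Multiset.map_cons, Multiset.sum_cons]
    have hn1 : 0 < normSq (z - r) := Complex.normSq_pos.mpr (hzsub r hr)
    have h1 : (0:ℝ) < (normSq (z - r))⁻¹ := by positivity
    have h2 : (0:ℝ) ≤ (R'.map (fun s => (normSq (z - s))⁻¹)).sum := by
      apply Multiset.sum_nonneg
      intro a ha
      obtain ⟨s, hs, rfl⟩ := Multiset.mem_map.mp ha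
      have : 0 < normSq (z - s) :=
        Complex.normSq_pos.mpr (hzsub s (Multiset.mem_cons_of_mem hs))
      positivity
    linarith
  exact mul_ne_zero (neg_ne_zero.mpr hz) (ne_of_gt hpos) him

private lemma derivNeZero {g : ℂ[X]} (hg : ∀ z : ℂ, z.im ≠ 0 → g.eval z ≠ 0)
    (hg' : derivative g ≠ 0) {z : ℂ} (hz : z.im ≠ 0) : (derivative g).eval z ≠ 0 := by
  have hg0 : g ≠ 0 := by rintro rfl; simp at hg'
  have hsplit := Splits.eq_prod_roots (IsAlgClosed.splits g)
  set R := g.roots with hRdef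
  have hRim : ∀ r ∈ R, r.im = 0 := by
    intro r hr
    by_contra him
    exact hg r him (isRoot_of_mem_roots hr)
  have hRne : R ≠ 0 := by
    intro h0
    rw [h0] at hsplit
    simp at hsplit
    apply hg'
    rw [hsplit]
    simp
  have hzr : ∀ r ∈ R, z - r ≠ 0 := fun r hrm h0 =>
    hz (by simpa [Complex.sub_im, hRim r hrm] using congrArg Complex.im h0)
  have hlc : g.leadingCoeff ≠ 0 := leadingCoeff_ne_zero.mpr hg0
  rw [hsplit, derivative_C_mul, eval_mul, eval_C, (derivEval z R hzr).1]
  exact mul_ne_zero hlc (mul_ne_zero (derivEval z R hzr).2 (imSumNeg hz R hRim hRne))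

private lemma iterDeriv {f : ℂ[X]} (hf : ∀ z : ℂ, z.im ≠ 0 → f.eval z ≠ 0) :
    ∀ k, derivative^[k] f ≠ 0 → ∀ z : ℂ, z.im ≠ 0 → (derivative^[k] f).eval z ≠ 0 := by
  intro k
  induction k with
  | zero => intro _ z hz; exact hf z hz
  | succ n IH =>
      intro hne z hz
      rw [Function.iterate_succ_apply'] at hne ⊢
      have hprev : derivative^[n] f ≠ 0 := by
        intro h0; apply hne; rw [h0]; simp
      exact derivNeZero (IH hprev) hne hz

private lemma evalSmul {d m : ℕ} {p : MvPolynomial (Fin d) ℂ} (hp : p.IsHomogeneous m)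
    (c : ℂ) (w : Fin d → ℂ) :
    MvPolynomial.eval (fun j => c * w j) p = c ^ m * MvPolynomial.eval w p := by
  rw [MvPolynomial.eval_eq, MvPolynomial.eval_eq, Finset.mul_sum]
  refine Finset.sum_congr rfl fun s hs => ?_
  have hdeg : (∑ j ∈ s.support, s j) = m := by
    have := hp (MvPolynomial.mem_support_iff.mp hs)
    simpa [Finsupp.weight_apply, Finsupp.sum] using this
  calc MvPolynomial.coeff s p * ∏ j ∈ s.support, (c * w j) ^ s j
      = MvPolynomial.coeff s p * ((∏ j ∈ s.support, c ^ s j) * ∏ j ∈ s.support, w j ^ s j) := by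
        rw [← Finset.prod_mul_distrib]; simp [mul_pow]
    _ = c ^ m * (MvPolynomial.coeff s p * ∏ j ∈ s.support, w j ^ s j) := by
        rw [Finset.prod_pow_eq_pow_sum, hdeg]; ring


private lemma partTwo (d : ℕ) (x : Fin d → ℝ) (m : ℕ) (p : MvPolynomial (Fin d) ℂ) (pk : ℕ → MvPolynomial (Fin d) ℂ)
      (hhom : p.IsHomogeneous m)
      (hhyp : ∀ y : Fin d → ℝ,
        MvPolynomial.eval (fun j => (x j : ℂ) + Complex.I * (y j : ℂ)) p ≠ 0)
      (hpk : ∀ k, k ≤ m → (pk k).IsHomogeneous (m - k))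
      (hexp : ∀ (y : Fin d → ℂ) (t : ℂ),
        MvPolynomial.eval (fun j => y j + t * (x j : ℂ)) p =
          ∑ k ∈ Finset.range (m + 1), MvPolynomial.eval y (pk k) * t ^ k)
      (k : ℕ) (hk : k ≤ m) (y : Fin d → ℝ) :
        MvPolynomial.eval (fun j => (x j : ℂ) + Complex.I * (y j : ℂ)) (pk k) ≠ 0 := by
  set Y : Fin d → ℂ := fun j => (y j : ℂ) with hYdef
  set F : (Fin d → ℂ) → Polynomial ℂ := fun w =>
    ∑ j ∈ Finset.range (m+1), Polynomial.C (MvPolynomial.eval w (pk j)) * Polynomial.X ^ j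
    with hFdef
  have hFeval : ∀ (w : Fin d → ℂ) (t : ℂ),
      (F w).eval t = MvPolynomial.eval (fun j => w j + t * (x j : ℂ)) p := by
    intro w t
    rw [hexp w t]
    simp [hFdef, Polynomial.eval_finset_sum]
  have hFcoeff : ∀ (w : Fin d → ℂ) (j : ℕ), j ≤ m →
      (F w).coeff j = MvPolynomial.eval w (pk j) := by
    intro w j hj
    simp only [hFdef, Polynomial.finset_sum_coeff, Polynomial.coeff_C_mul,
      Polynomial.coeff_X_pow, mul_ite, mul_one, mul_zero]
    rw [Finset.sum_ite_eq (Finset.range (m+1)) j]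
    simp [Nat.lt_succ_of_le hj]
  -- F Y has no nonreal roots
  have hFRR : ∀ z : ℂ, z.im ≠ 0 → (F Y).eval z ≠ 0 := by
    intro z hz
    rw [hFeval]
    set w : Fin d → ℝ := fun j => -(y j + z.re * x j) / z.im with hwdef
    have hzi : (z.im : ℂ) ≠ 0 := Complex.ofReal_ne_zero.mpr hz
    have key : (fun j => Y j + z * (x j : ℂ)) =
        fun j => (z.im * Complex.I) * ((x j : ℂ) + Complex.I * (w j : ℂ)) := by
      funext j
      simp only [hYdef, hwdef]
      have hwc : ((-(y j + z.re * x j) / z.im : ℝ) : ℂ)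
          = -((y j : ℂ) + (z.re : ℂ) * (x j : ℂ)) / (z.im : ℂ) := by push_cast; ring
      rw [hwc]
      have expand : ((z.im : ℂ) * Complex.I) *
            ((x j : ℂ) + Complex.I * (-((y j : ℂ) + (z.re : ℂ) * (x j : ℂ)) / (z.im : ℂ)))
          = (z.im : ℂ) * (x j : ℂ) * Complex.I +
            ((z.im : ℂ) * (-((y j : ℂ) + (z.re : ℂ) * (x j : ℂ)) / (z.im : ℂ))) *
              (Complex.I * Complex.I) := by ring
      rw [expand, Complex.I_mul_I,
        show (z.im : ℂ) * (-((y j : ℂ) + (z.re : ℂ) * (x j : ℂ)) / (z.im : ℂ))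
            = -((y j : ℂ) + (z.re : ℂ) * (x j : ℂ)) from by field_simp]
      linear_combination (-(x j : ℂ)) * Complex.re_add_im z
    rw [key, evalSmul hhom]
    exact mul_ne_zero (pow_ne_zero m (mul_ne_zero hzi Complex.I_ne_zero)) (hhyp w)
  have hx0 : MvPolynomial.eval (fun j => (x j : ℂ)) p ≠ 0 := by
    have := hhyp 0
    simpa using this
  -- pk m is the constant eval x p
  have hpkm : MvPolynomial.eval Y (pk m) = MvPolynomial.eval (fun j => (x j : ℂ)) p := by
    have h0m : (pk m).IsHomogeneous 0 := by simpa using hpk m le_rfl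
    have hconst : MvPolynomial.eval Y (pk m) = MvPolynomial.eval (fun _ => (0:ℂ)) (pk m) := by
      have h0 := evalSmul h0m (0:ℂ) Y
      simpa using h0.symm
    have hfun : ∀ t : ℂ, (F (fun _ => 0)).eval t =
        (Polynomial.C (MvPolynomial.eval (fun j => (x j : ℂ)) p) * Polynomial.X ^ m).eval t := by
      intro t
      rw [hFeval]
      rw [show (fun j => (fun _ => (0:ℂ)) j + t * (x j : ℂ)) = fun j => t * (x j : ℂ) from
        by funext j; simp]
      rw [evalSmul hhom t (fun j => (x j : ℂ))]
      rw [Polynomial.eval_mul, Polynomial.eval_C, Polynomial.eval_pow, Polynomial.eval_X]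
      ring
    have hFeq := Polynomial.funext hfun
    have hcm := congrArg (fun q => Polynomial.coeff q m) hFeq
    simp only [Polynomial.coeff_C_mul, Polynomial.coeff_X_pow, eq_self_iff_true, if_true,
      mul_one] at hcm
    rw [hFcoeff _ m le_rfl] at hcm
    rw [hconst, hcm]
  have hcoeffm : (F Y).coeff m = MvPolynomial.eval (fun j => (x j : ℂ)) p := by
    rw [hFcoeff Y m le_rfl, hpkm]
  -- iterated derivative is nonzero
  have hiterEq : Polynomial.derivative^[k] (F Y) = (Nat.factorial k) • Polynomial.hasseDeriv k (F Y) := by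
    rw [← Polynomial.factorial_smul_hasseDeriv]
    simp
  have hDne : Polynomial.derivative^[k] (F Y) ≠ 0 := by
    intro h0
    have hc : (Polynomial.derivative^[k] (F Y)).coeff (m - k) = 0 := by rw [h0]; simp
    rw [hiterEq, Polynomial.coeff_smul, Polynomial.hasseDeriv_coeff,
      Nat.sub_add_cancel hk, hcoeffm, nsmul_eq_mul] at hc
    have hkf : ((k.factorial : ℕ) : ℂ) ≠ 0 :=
      Nat.cast_ne_zero.mpr (Nat.factorial_ne_zero k)
    have hch : ((m.choose k : ℕ) : ℂ) ≠ 0 :=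
      Nat.cast_ne_zero.mpr (Nat.choose_pos hk).ne'
    exact (mul_ne_zero hkf (mul_ne_zero hch hx0)) hc
  -- taylor relation
  have hrel : ∀ s : ℂ, MvPolynomial.eval (fun j => Y j + s * (x j : ℂ)) (pk k)
      = (Polynomial.hasseDeriv k (F Y)).eval s := by
    intro s
    have htay : F (fun j => Y j + s * (x j : ℂ)) = (Polynomial.taylor s) (F Y) := by
      apply Polynomial.funext
      intro t
      rw [hFeval, Polynomial.taylor_eval, hFeval,
        show (fun j => Y j + s * (x j : ℂ) + t * (x j : ℂ))
            = (fun j => Y j + (t + s) * (x j : ℂ)) from by funext j; ring]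
    have hck := congrArg (fun q => Polynomial.coeff q k) htay
    rw [hFcoeff _ k hk, Polynomial.taylor_coeff] at hck
    exact hck
  have him : (-Complex.I).im ≠ 0 := by simp
  have hne : (Polynomial.hasseDeriv k (F Y)).eval (-Complex.I) ≠ 0 := by
    have h1 := iterDeriv hFRR k hDne (-Complex.I) him
    rw [hiterEq] at h1
    intro h0
    apply h1
    rw [nsmul_eq_mul, Polynomial.eval_mul, h0, mul_zero]
  have hsc := evalSmul (hpk k hk) Complex.I (fun j => Y j + (-Complex.I) * (x j : ℂ))
  have hfn : (fun j => Complex.I * (Y j + (-Complex.I) * (x j : ℂ)))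
      = fun j => (x j : ℂ) + Complex.I * (y j : ℂ) := by
    funext j
    simp only [hYdef]
    have hII : Complex.I * (-Complex.I) = 1 := by
      rw [mul_neg, Complex.I_mul_I]; ring
    calc Complex.I * ((y j : ℂ) + (-Complex.I) * (x j : ℂ))
        = (Complex.I * (-Complex.I)) * (x j : ℂ) + Complex.I * (y j : ℂ) := by ring
      _ = (x j : ℂ) + Complex.I * (y j : ℂ) := by rw [hII]; ring
  rw [hfn] at hsc
  rw [hsc, hrel (-Complex.I)]
  exact mul_ne_zero (pow_ne_zero _ Complex.I_ne_zero) hne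

/-- **Proposition (products and polarization preserve hyperbolicity).**
Fix `x ∈ ℝ^d`.  (i) If homogeneous polynomials `p, q` are hyperbolic in direction `x`,
then so is `p * q`.  (ii) If `p` is homogeneous of degree `m`, hyperbolic in direction
`x`, and `p(y + t x) = ∑_{k=0}^m p_k(y) t^k` with each `p_k` homogeneous of degree
`m - k`, then every `p_k` with `k ≤ m` is hyperbolic in direction `x`. -/
theorem stmt2 (d : ℕ) (x : Fin d → ℝ) :
    (∀ (mp mq : ℕ) (p q : MvPolynomial (Fin d) ℂ),
      p.IsHomogeneous mp → q.IsHomogeneous mq →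
      (∀ y : Fin d → ℝ,
        MvPolynomial.eval (fun j => (x j : ℂ) + Complex.I * (y j : ℂ)) p ≠ 0) →
      (∀ y : Fin d → ℝ,
        MvPolynomial.eval (fun j => (x j : ℂ) + Complex.I * (y j : ℂ)) q ≠ 0) →
      (∀ y : Fin d → ℝ,
        MvPolynomial.eval (fun j => (x j : ℂ) + Complex.I * (y j : ℂ)) (p * q) ≠ 0)) ∧
    (∀ (m : ℕ) (p : MvPolynomial (Fin d) ℂ) (pk : ℕ → MvPolynomial (Fin d) ℂ),
      p.IsHomogeneous m →
      (∀ y : Fin d → ℝ,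
        MvPolynomial.eval (fun j => (x j : ℂ) + Complex.I * (y j : ℂ)) p ≠ 0) →
      (∀ k, k ≤ m → (pk k).IsHomogeneous (m - k)) →
      (∀ (y : Fin d → ℂ) (t : ℂ),
        MvPolynomial.eval (fun j => y j + t * (x j : ℂ)) p =
          ∑ k ∈ Finset.range (m + 1), MvPolynomial.eval y (pk k) * t ^ k) →
      ∀ k, k ≤ m → ∀ y : Fin d → ℝ,
        MvPolynomial.eval (fun j => (x j : ℂ) + Complex.I * (y j : ℂ)) (pk k) ≠ 0) := by
  constructor
  · intro mp mq p q _ _ hp hq y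
    rw [map_mul]
    exact mul_ne_zero (hp y) (hq y)
  · intro m p pk hhom hhyp hpk hexp k hk y
    exact partTwo d x m p pk hhom hhyp hpk hexp k hk y
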